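/- For every integer h ≥ 2 and every n > h, λ₂_max(K_{h+1} minor free, n+1) ≥ λ₂_max(K_h minor free, n) + 1. -/

import Mathlib

/-- The Fiedler value (second smallest eigenvalue, with multiplicity, of the Laplacian
matrix `D - A`) of a finite simple graph. -/
noncomputable def lambda2 {V : Type*} [Fintype V] [DecidableEq V] (G : SimpleGraph V) : ℝ :=
  letI := Classical.decRel G.Adj
  ((Finset.univ.val.map (SimpleGraph.posSemidef_lapMatrix ℝ G).1.eigenvalues).sort (· ≤ ·)).getD 1 0

/-- `H` is a minor of `G` (branch-set model): pairwise disjoint nonempty connected subsets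
of `V(G)`, one for each vertex of `H`, with an edge of `G` between the branch sets of any
two adjacent vertices of `H`. -/
def IsMinorOf {W V : Type*} (H : SimpleGraph W) (G : SimpleGraph V) : Prop :=
  ∃ B : W → Set V, (∀ i, (B i).Nonempty) ∧
    (∀ i, ((G.induce (B i)).Connected)) ∧
    (Pairwise fun i j => Disjoint (B i) (B j)) ∧
    ∀ ⦃i j⦄, H.Adj i j → ∃ u ∈ B i, ∃ v ∈ B j, G.Adj u v

/-- `G` has no `K_h` minor. -/
def KMinorFree {V : Type*} (G : SimpleGraph V) (h : ℕ) : Prop :=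
  ¬ IsMinorOf (⊤ : SimpleGraph (Fin h)) G

/-- `λ₂max(𝓒, n)`: the maximum Fiedler value of an `n`-vertex graph of the class `𝓒`. -/
noncomputable def lambda2Max (𝓒 : ∀ n, Set (SimpleGraph (Fin n))) (n : ℕ) : ℝ :=
  sSup {x : ℝ | ∃ G ∈ 𝓒 n, x = lambda2 G}


section Aux

open Matrix Polynomial Finset

variable {m : Type*} [Fintype m] [DecidableEq m]

lemma charmatrix_diagonal' (d : m → ℝ) :
    charmatrix (diagonal d) = diagonal (fun i => (X : ℝ[X]) - C (d i)) := by
  ext i j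
  by_cases h : i = j
  · subst h; simp
  · simp [charmatrix_apply_ne _ _ _ h, diagonal_apply_ne _ h]

lemma charpoly_diagonal' (d : m → ℝ) :
    (diagonal d).charpoly = ∏ i, ((X : ℝ[X]) - C (d i)) := by
  rw [Matrix.charpoly, charmatrix_diagonal', det_diagonal]

lemma charpoly_conj' (P Q A : Matrix m m ℝ) (h1 : P * Q = 1) (h2 : Q * P = 1) :
    (P * A * Q).charpoly = A.charpoly := by
  have hcomm : P.map C * Matrix.scalar m (X : ℝ[X]) = Matrix.scalar m X * P.map C :=
    (Matrix.scalar_commute (X : ℝ[X]) (fun r' => Commute.all _ _) (P.map C)).symm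
  have hc : charmatrix (P * A * Q) = P.map C * charmatrix A * Q.map C := by
    unfold charmatrix
    simp only [RingHom.mapMatrix_apply]
    rw [mul_sub, sub_mul, hcomm, mul_assoc (Matrix.scalar m X), ← Matrix.map_mul, h1,
      Matrix.map_one _ (map_zero C) (map_one C), mul_one, ← Matrix.map_mul, ← Matrix.map_mul]
  have hdet : (P.map C).det * (Q.map C).det = 1 := by
    rw [← det_mul, ← Matrix.map_mul, h1, Matrix.map_one _ (map_zero C) (map_one C), det_one]
  unfold Matrix.charpoly
  rw [hc, det_mul, det_mul]
  rw [mul_comm ((P.map C).det), mul_assoc, hdet, mul_one]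

lemma eig_charpoly (A : Matrix m m ℝ) (hA : A.IsHermitian) :
    A.charpoly = ∏ i, ((X : ℝ[X]) - C (hA.eigenvalues i)) := by
  have h1 : (hA.eigenvectorUnitary : Matrix m m ℝ) * star (hA.eigenvectorUnitary : Matrix m m ℝ) = 1 :=
    (Matrix.mem_unitaryGroup_iff).mp hA.eigenvectorUnitary.2
  have h2 : star (hA.eigenvectorUnitary : Matrix m m ℝ) * (hA.eigenvectorUnitary : Matrix m m ℝ) = 1 :=
    (Matrix.mem_unitaryGroup_iff').mp hA.eigenvectorUnitary.2
  have spec := hA.spectral_theorem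
  have hd : diagonal (RCLike.ofReal ∘ hA.eigenvalues) = diagonal hA.eigenvalues := by
    congr 1
  calc A.charpoly = ((hA.eigenvectorUnitary : Matrix m m ℝ) * diagonal hA.eigenvalues *
        star (hA.eigenvectorUnitary : Matrix m m ℝ)).charpoly := by
          rw [← hd, ← Unitary.conjStarAlgAut_apply (S := ℝ), ← spec]
    _ = (diagonal hA.eigenvalues).charpoly := charpoly_conj' _ _ _ h1 h2
    _ = _ := charpoly_diagonal' _

lemma eig_multiset (A : Matrix m m ℝ) (hA : A.IsHermitian) :
    A.charpoly.roots = Finset.univ.val.map hA.eigenvalues := by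
  rw [eig_charpoly A hA, ← Polynomial.roots_multiset_prod_X_sub_C (univ.val.map hA.eigenvalues)]
  congr 1
  rw [Multiset.map_map, Finset.prod_eq_multiset_prod]
  rfl

lemma charpoly_splits (A : Matrix m m ℝ) (hA : A.IsHermitian) :
    A.charpoly.Splits := by
  rw [eig_charpoly A hA]
  exact Polynomial.Splits.prod (fun i _ => Polynomial.Splits.X_sub_C _)

lemma trace_eq_sum_eig (A : Matrix m m ℝ) (hA : A.IsHermitian) :
    A.trace = ∑ i, hA.eigenvalues i := by
  rw [Matrix.trace_eq_sum_roots_charpoly_of_splits (charpoly_splits A hA), eig_multiset A hA,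
    Finset.sum_eq_multiset_sum]
open Matrix Polynomial Finset

variable {V : Type*} [Fintype V] [DecidableEq V]

lemma lapMatrix_inst_eq (G : SimpleGraph V) (i1 i2 : DecidableRel G.Adj) :
    @SimpleGraph.lapMatrix V ℝ _ G i1 _ _ = @SimpleGraph.lapMatrix V ℝ _ G i2 _ _ := by
  congr!

lemma lambda2_eq_roots' (G : SimpleGraph V) :
    lambda2 G = (((@SimpleGraph.lapMatrix V ℝ _ G (Classical.decRel G.Adj) _ _).charpoly.roots).sort
      (· ≤ ·)).getD 1 0 := by
  unfold lambda2
  rw [eig_multiset]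

lemma lambda2_eq_roots (G : SimpleGraph V) [inst : DecidableRel G.Adj] :
    lambda2 G = (((G.lapMatrix ℝ).charpoly.roots).sort (· ≤ ·)).getD 1 0 := by
  rw [lambda2_eq_roots', lapMatrix_inst_eq G (Classical.decRel G.Adj) inst]

/-- the join of `G` with one extra universal vertex -/
def joinOne (G : SimpleGraph V) : SimpleGraph (V ⊕ Fin 1) where
  Adj x y := match x, y with
    | .inl a, .inl b => G.Adj a b
    | .inl _, .inr _ => True
    | .inr _, .inl _ => True
    | .inr _, .inr _ => False
  symm := ⟨by rintro (a|a) (b|b) hab <;> simp_all <;> exact hab.symm⟩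
  loopless := ⟨by rintro (a|a) h <;> simp_all⟩

instance (G : SimpleGraph V) [DecidableRel G.Adj] : DecidableRel (joinOne G).Adj := by
  rintro (a|a) (b|b) <;> simp only [joinOne] <;> infer_instance

@[simp] lemma joinOne_adj_inl_inl (G : SimpleGraph V) (a b : V) :
    (joinOne G).Adj (.inl a) (.inl b) ↔ G.Adj a b := Iff.rfl
@[simp] lemma joinOne_adj_inl_inr (G : SimpleGraph V) (a : V) (b : Fin 1) :
    (joinOne G).Adj (.inl a) (.inr b) := trivial
@[simp] lemma joinOne_adj_inr_inl (G : SimpleGraph V) (a : Fin 1) (b : V) :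
    (joinOne G).Adj (.inr a) (.inl b) := trivial
@[simp] lemma joinOne_adj_inr_inr (G : SimpleGraph V) (a b : Fin 1) :
    ¬ (joinOne G).Adj (.inr a) (.inr b) := fun h => h

lemma lapMatrix_joinOne (G : SimpleGraph V) [DecidableRel G.Adj] :
    (joinOne G).lapMatrix ℝ = fromBlocks (G.lapMatrix ℝ + 1) (Matrix.of fun _ _ => -1)
      (Matrix.of fun _ _ => -1) (Matrix.of fun _ _ => (Fintype.card V : ℝ)) := by
  have hdeg1 : ∀ v : V, ((joinOne G).degree (.inl v) : ℝ) = G.degree v + 1 := by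
    intro v
    rw [(joinOne G).degree_eq_sum_if_adj (R := ℝ), G.degree_eq_sum_if_adj (R := ℝ),
      Fintype.sum_sum_type]
    simp
  have hdeg2 : ∀ x : Fin 1, ((joinOne G).degree (.inr x) : ℝ) = (Fintype.card V : ℝ) := by
    intro x
    rw [(joinOne G).degree_eq_sum_if_adj (R := ℝ), Fintype.sum_sum_type]
    simp [Finset.card_univ]
  ext (i|i) (j|j) <;>
    simp only [SimpleGraph.lapMatrix, SimpleGraph.degMatrix, SimpleGraph.adjMatrix,
      Matrix.sub_apply, Matrix.diagonal_apply, Matrix.of_apply, fromBlocks_apply₁₁,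
      fromBlocks_apply₁₂, fromBlocks_apply₂₁, fromBlocks_apply₂₂, Matrix.add_apply,
      Matrix.one_apply]
  · by_cases h : i = j
    · subst h; simp [hdeg1 i]
    · simp [h, Sum.inl.injEq]
  · simp [joinOne_adj_inl_inr]
  · simp [joinOne_adj_inr_inl]
  · have : i = j := Subsingleton.elim i j
    subst this
    simp [hdeg2 i]

section P3
open Matrix Polynomial Finset

variable {m : Type*} [Fintype m] [DecidableEq m]

lemma roots_prod_linear (f : m → ℝ) :
    (∏ i, ((X:ℝ[X]) - C (f i))).roots = univ.val.map f := by
  rw [← Polynomial.roots_multiset_prod_X_sub_C (univ.val.map f)]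
  congr 1
  rw [Multiset.map_map, Finset.prod_eq_multiset_prod]
  rfl

lemma sort_getD_zero {s : Multiset ℝ} {a : ℝ} (ha : a ∈ s) (hmin : ∀ b ∈ s, a ≤ b) :
    (s.sort (· ≤ ·)).getD 0 0 = a := by
  rw [← Multiset.cons_erase ha,
    Multiset.sort_cons a _ (· ≤ ·) (fun b hb => hmin b (Multiset.mem_of_mem_erase hb))]
  rfl

lemma sort_getD_one {s : Multiset ℝ} (h0 : ∀ b ∈ s, (0:ℝ) ≤ b) :
    (((0:ℝ) ::ₘ s).sort (· ≤ ·)).getD 1 0 = (s.sort (· ≤ ·)).getD 0 0 := by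
  rw [Multiset.sort_cons 0 s (· ≤ ·) h0]
  rfl

lemma min_mem_le {s : Multiset ℝ} (hne : s ≠ 0) :
    (s.sort (· ≤ ·)).getD 0 0 ∈ s ∧ ∀ b ∈ s, (s.sort (· ≤ ·)).getD 0 0 ≤ b := by
  rcases hlist : s.sort (· ≤ ·) with _ | ⟨x, l⟩
  · exfalso
    have := Multiset.length_sort (α := ℝ) (· ≤ ·) (s := s)
    rw [hlist] at this
    exact hne (Multiset.card_eq_zero.mp this.symm)
  · have hmem : x ∈ s := by
      rw [← Multiset.mem_sort (· ≤ ·), hlist]; exact List.mem_cons_self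
    have hsorted := Multiset.pairwise_sort s (· ≤ ·)
    rw [hlist] at hsorted
    obtain ⟨h1, -⟩ := List.pairwise_cons.mp hsorted
    constructor
    · simpa [hlist] using hmem
    · intro b hb
      rw [← Multiset.mem_sort (· ≤ ·) (s := s), hlist] at hb
      rcases List.mem_cons.mp hb with rfl | hb
      · simp [hlist]
      · simpa [hlist] using h1 b hb

end P3

section P4
open Matrix Polynomial Finset

variable {V : Type*} [Fintype V] [DecidableEq V]

lemma lambda2_joinOne (G : SimpleGraph V) [instG : DecidableRel G.Adj]
    (hV : 2 ≤ Fintype.card V) : lambda2 (joinOne G) = lambda2 G + 1 := by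
  have hNV : Nonempty V := Fintype.card_pos_iff.mp (by omega)
  set N := Fintype.card V with hNdef
  have hN1 : (1:ℝ) ≤ (N:ℝ) := by exact_mod_cast (by omega : 1 ≤ N)
  have hNne : (N:ℝ) ≠ 0 := by linarith
  set L := G.lapMatrix ℝ with hLdef
  have hLpsd := SimpleGraph.posSemidef_lapMatrix ℝ G
  set hH := hLpsd.1 with hHdef
  set μ := hH.eigenvalues with hμdef
  set U := (hH.eigenvectorUnitary : Matrix V V ℝ) with hUdef
  have hU1 : U * star U = 1 := (Matrix.mem_unitaryGroup_iff).mp hH.eigenvectorUnitary.2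
  have hU2 : star U * U = 1 := (Matrix.mem_unitaryGroup_iff').mp hH.eigenvectorUnitary.2
  have hspec : L * U = U * Matrix.diagonal μ := by
    have hd : Matrix.diagonal (RCLike.ofReal ∘ μ) = Matrix.diagonal μ := by congr 1
    calc L * U = (U * Matrix.diagonal μ * star U) * U := by rw [← hd, ← Unitary.conjStarAlgAut_apply (S := ℝ), ← hH.spectral_theorem]
      _ = U * Matrix.diagonal μ * (star U * U) := by rw [mul_assoc]
      _ = U * Matrix.diagonal μ := by rw [hU2, mul_one]
  have hcol : ∀ i, L *ᵥ (fun v => U v i) = μ i • (fun v => U v i) := by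
    intro i; funext v
    have h := congrFun (congrFun hspec v) i
    rw [Matrix.mul_apply, Matrix.mul_diagonal] at h
    simpa [Matrix.mulVec, dotProduct, mul_comm] using h
  -- row and column sums of L vanish
  have hLone : L *ᵥ (fun _ => (1:ℝ)) = 0 := G.lapMatrix_mulVec_const_eq_zero
  have hrow0 : ∀ k, ∑ v, L k v = 0 := by
    intro k
    have := congrFun hLone k
    simpa [Matrix.mulVec, dotProduct] using this
  have hsym : ∀ v k, L v k = L k v := by
    intro v k
    exact (G.isSymm_lapMatrix (R := ℝ)).apply k v
  have hcolsum0 : ∀ k, ∑ v, L v k = 0 := by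
    intro k
    calc ∑ v, L v k = ∑ v, L k v := by simp_rw [hsym]
      _ = 0 := hrow0 k
  set s : V → ℝ := fun i => ∑ v, U v i with hsdef
  have hμs : ∀ i, μ i * s i = 0 := by
    intro i
    have h1 : ∑ v, (L *ᵥ (fun w => U w i)) v = 0 := by
      simp only [Matrix.mulVec, dotProduct]
      rw [Finset.sum_comm]
      simp only [← Finset.sum_mul, hcolsum0, zero_mul, Finset.sum_const_zero]
    rw [hcol i] at h1
    simpa [hsdef, Finset.mul_sum] using h1
  have hUs : U *ᵥ s = fun _ => (1:ℝ) := by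
    have hsv : s = star U *ᵥ (fun _ => (1:ℝ)) := by
      funext i
      simp [hsdef, Matrix.mulVec, dotProduct, Matrix.conjTranspose_apply]
    rw [hsv, Matrix.mulVec_mulVec, hU1, Matrix.one_mulVec]
  obtain ⟨i₀, hi₀⟩ : ∃ i, s i ≠ 0 := by
    by_contra hall
    push_neg at hall
    have hs0 : s = 0 := funext hall
    have h1 := hUs
    rw [hs0, Matrix.mulVec_zero] at h1
    exact one_ne_zero (congrFun h1 (Classical.arbitrary V)).symm
  have hμ0 : μ i₀ = 0 := by
    rcases mul_eq_zero.mp (hμs i₀) with h | h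
    · exact h
    · exact absurd h hi₀
  -- the shifted eigenvectors
  set c : V → ℝ := fun i => s i / N with hcdef
  set w : V → V → ℝ := fun i v => U v i - c i with hwdef
  have hsumw : ∀ i, ∑ v, w i v = 0 := by
    intro i
    simp only [hwdef, Finset.sum_sub_distrib, Finset.sum_const, Finset.card_univ, ← hNdef,
      nsmul_eq_mul, hcdef]
    field_simp
    exact sub_eq_zero.mpr rfl
  have hLw : ∀ i, L *ᵥ w i = μ i • w i := by
    intro i
    have hwi : w i = (fun v => U v i) - (fun _ => c i) := by funext v; simp [hwdef]
    have hone : (fun (_ : V) => c i) = c i • (fun _ => (1:ℝ)) := by funext v; simp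
    rw [hwi, hone, Matrix.mulVec_sub, Matrix.mulVec_smul, hLone, smul_zero, sub_zero, hcol i]
    have hcμ : μ i * c i = 0 := by
      rcases mul_eq_zero.mp (hμs i) with h | h
      · simp [hcdef, h]
      · simp [hcdef, h]
    funext v
    simp only [Pi.smul_apply, Pi.sub_apply, smul_eq_mul]
    have : μ i * c i = 0 := hcμ
    nlinarith [this]

  -- data for the join graph
  set d' : V ⊕ Fin 1 → ℝ :=
    Sum.elim (fun i => if i = i₀ then 0 else μ i + 1) (fun _ => (N:ℝ)+1) with hd'def
  set col : V ⊕ Fin 1 → (V ⊕ Fin 1 → ℝ) :=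
    Sum.elim (fun i => if i = i₀ then Sum.elim (fun _ => (1:ℝ)) (fun _ => (1:ℝ))
        else Sum.elim (w i) (fun _ => (0:ℝ)))
      (fun _ => Sum.elim (fun _ => (1:ℝ)) (fun _ => -(N:ℝ))) with hcoldef
  set P : Matrix (V ⊕ Fin 1) (V ⊕ Fin 1) ℝ := Matrix.of (fun k j => col j k) with hPdef
  set L' := (joinOne G).lapMatrix ℝ with hL'def
  have hmulL : ∀ (x : V → ℝ) (y : Fin 1 → ℝ) (v : V),
      (L' *ᵥ Sum.elim x y) (Sum.inl v) = (L *ᵥ x) v + x v - y 0 := by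
    intro x y v
    rw [hL'def, lapMatrix_joinOne]
    simp only [Matrix.mulVec, dotProduct, Fintype.sum_sum_type, fromBlocks_apply₁₁,
      fromBlocks_apply₁₂, Sum.elim_inl, Sum.elim_inr, Matrix.of_apply, Fin.sum_univ_one,
      Matrix.add_apply, Matrix.one_apply]
    rw [Finset.sum_congr rfl (fun a _ => add_mul (L v a) _ (x a)), Finset.sum_add_distrib]
    have : ∑ a : V, (if v = a then (1:ℝ) else 0) * x a = x v := by
      simp [ite_mul]
    rw [this]
    ring
  have hmulR : ∀ (x : V → ℝ) (y : Fin 1 → ℝ) (z : Fin 1),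
      (L' *ᵥ Sum.elim x y) (Sum.inr z) = -(∑ v, x v) + N * y 0 := by
    intro x y z
    rw [hL'def, lapMatrix_joinOne]
    simp only [Matrix.mulVec, dotProduct, Fintype.sum_sum_type, fromBlocks_apply₂₁,
      fromBlocks_apply₂₂, Sum.elim_inl, Sum.elim_inr, Matrix.of_apply, Fin.sum_univ_one]
    rw [← hNdef]
    simp [Finset.sum_neg_distrib]
  have heig : ∀ j, L' *ᵥ col j = d' j • col j := by
    rintro (i | z)
    · by_cases hii : i = i₀
      · subst hii
        have hcc : col (Sum.inl i) = Sum.elim (fun _ => (1:ℝ)) (fun _ => (1:ℝ)) := by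
          simp [hcoldef]
        have hdd : d' (Sum.inl i) = 0 := by simp [hd'def]
        rw [hcc, hdd, zero_smul]
        funext k
        rcases k with v | z
        · rw [hmulL]
          have := congrFun hLone v
          simp_all
        · rw [hmulR]
          simp [Finset.card_univ, ← hNdef]
      · have hcc : col (Sum.inl i) = Sum.elim (w i) (fun _ => (0:ℝ)) := by
          simp [hcoldef, hii]
        have hdd : d' (Sum.inl i) = μ i + 1 := by simp [hd'def, hii]
        rw [hcc, hdd]
        funext k
        rcases k with v | z
        · rw [hmulL]
          have h := congrFun (hLw i) v
          simp only [Pi.smul_apply, smul_eq_mul] at h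
          simp only [Pi.smul_apply, Sum.elim_inl, smul_eq_mul, h]
          ring
        · rw [hmulR]
          simp [hsumw i]
    · have hcc : col (Sum.inr z) = Sum.elim (fun _ => (1:ℝ)) (fun _ => -(N:ℝ)) := by
        simp [hcoldef]
      have hdd : d' (Sum.inr z) = (N:ℝ) + 1 := by simp [hd'def]
      rw [hcc, hdd]
      funext k
      rcases k with v | z'
      · rw [hmulL]
        have := congrFun hLone v
        simp_all
        ring
      · rw [hmulR]
        simp [Finset.card_univ, ← hNdef]
        ring
  have hLP : L' * P = P * Matrix.diagonal d' := by
    ext k j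
    have h := congrFun (heig j) k
    simp only [Matrix.mulVec, dotProduct, Pi.smul_apply, smul_eq_mul] at h
    rw [Matrix.mul_apply, Matrix.mul_diagonal]
    simp only [hPdef, Matrix.of_apply]
    rw [h]
    ring

  have hPdetUnit : IsUnit P.det := by
    rw [isUnit_iff_ne_zero]
    intro hdet
    obtain ⟨a, ha0, hPa⟩ := (Matrix.exists_mulVec_eq_zero_iff).mpr hdet
    have hE : ∀ k, (∑ i, col (Sum.inl i) k * a (Sum.inl i)) + col (Sum.inr 0) k * a (Sum.inr 0) = 0 := by
      intro k
      have h := congrFun hPa k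
      simpa only [Matrix.mulVec, dotProduct, hPdef, Matrix.of_apply, Pi.zero_apply,
        Fintype.sum_sum_type, Fin.sum_univ_one] using h
    have hxb : a (Sum.inl i₀) = N * a (Sum.inr 0) := by
      have h := hE (Sum.inr 0)
      have hc1 : ∀ i, col (Sum.inl i) (Sum.inr 0) = if i = i₀ then 1 else 0 := by
        intro i
        by_cases hii : i = i₀ <;> simp [hcoldef, hii]
      have hc2 : col (Sum.inr 0) (Sum.inr 0) = -(N:ℝ) := by simp [hcoldef]
      simp only [hc1, hc2] at h
      have hsum : ∑ i, (if i = i₀ then (1:ℝ) else 0) * a (Sum.inl i) = a (Sum.inl i₀) := by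
        simp [ite_mul]
      rw [hsum] at h
      linarith
    set S : ℝ := ∑ i, (if i = i₀ then 0 else a (Sum.inl i) * c i) with hSdef
    set κ : ℝ := a (Sum.inl i₀) + a (Sum.inr 0) - S with hκdef
    set y : V → ℝ := fun i => (if i = i₀ then 0 else a (Sum.inl i)) + κ * s i with hydef
    have hUy : U *ᵥ y = 0 := by
      funext v
      have hEv := hE (Sum.inl v)
      have hcol1 : ∀ i, col (Sum.inl i) (Sum.inl v) = if i = i₀ then 1 else w i v := by
        intro i; by_cases hii : i = i₀ <;> simp [hcoldef, hii]
      have hcol2 : col (Sum.inr 0) (Sum.inl v) = 1 := by simp [hcoldef]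
      simp only [hcol1, hcol2, one_mul] at hEv
      have hsplit : ∀ i, (if i = i₀ then (1:ℝ) else w i v) * a (Sum.inl i)
          = ((if i = i₀ then 0 else U v i * a (Sum.inl i))
              - (if i = i₀ then 0 else a (Sum.inl i) * c i))
            + (if i = i₀ then a (Sum.inl i) else 0) := by
        intro i
        by_cases hii : i = i₀
        · simp [hii]
        · simp only [hii, if_neg hii, if_false]
          simp [hwdef]
          ring
      rw [Finset.sum_congr rfl (fun i _ => hsplit i)] at hEv
      rw [Finset.sum_add_distrib, Finset.sum_sub_distrib] at hEv
      have hxi0 : ∑ i, (if i = i₀ then a (Sum.inl i) else 0) = a (Sum.inl i₀) := by simp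
      rw [hxi0, ← hSdef] at hEv
      have hUsv : ∑ i, U v i * s i = 1 := by
        have h := congrFun hUs v
        simpa [Matrix.mulVec, dotProduct] using h
      have lhs : (U *ᵥ y) v = ∑ i, (U v i * ((if i = i₀ then 0 else a (Sum.inl i)) + κ * s i)) := by
        simp [Matrix.mulVec, dotProduct, hydef]
      have expand : ∑ i, (U v i * ((if i = i₀ then 0 else a (Sum.inl i)) + κ * s i))
          = (∑ i, (if i = i₀ then 0 else U v i * a (Sum.inl i))) + κ * ∑ i, U v i * s i := by
        rw [Finset.mul_sum]
        rw [← Finset.sum_add_distrib]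
        apply Finset.sum_congr rfl
        intro i _
        by_cases hii : i = i₀ <;> simp [hii] <;> ring
      rw [Pi.zero_apply, lhs, expand, hUsv, mul_one]
      linarith [hEv]
    have hy0 : y = 0 := by
      have h2 := congrArg (fun z => star U *ᵥ z) hUy
      simpa [Matrix.mulVec_mulVec, hU2, Matrix.one_mulVec, Matrix.mulVec_zero] using h2
    have hκ0 : κ = 0 := by
      have h := congrFun hy0 i₀
      simp [hydef] at h
      rcases h with h | h
      · exact h
      · exact absurd h hi₀
    have hxne : ∀ i, i ≠ i₀ → a (Sum.inl i) = 0 := by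
      intro i hii
      have h := congrFun hy0 i
      simpa [hydef, hii, hκ0] using h
    have hS0 : S = 0 := by
      rw [hSdef]
      apply Finset.sum_eq_zero
      intro i _
      by_cases hii : i = i₀
      · simp [hii]
      · simp [hii, hxne i hii]
    have hb0 : a (Sum.inr 0) = 0 := by
      have h1 : a (Sum.inl i₀) + a (Sum.inr 0) = 0 := by
        rw [hκdef] at hκ0
        linarith [hS0]
      have h2 : a (Sum.inr 0) * ((N:ℝ) + 1) = 0 := by nlinarith [hxb]
      rcases mul_eq_zero.mp h2 with h | h
      · exact h
      · linarith
    apply ha0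
    funext k
    rcases k with v | z
    · by_cases hv : v = i₀
      · subst hv
        have : a (Sum.inl v) = (N:ℝ) * a (Sum.inr 0) := hxb
        rw [Pi.zero_apply, this, hb0, mul_zero]
      · exact hxne v hv
    · have hz : z = 0 := Subsingleton.elim z 0
      rw [hz, Pi.zero_apply, hb0]

  have hPQ : P * P⁻¹ = 1 := Matrix.mul_nonsing_inv P hPdetUnit
  have hQP : P⁻¹ * P = 1 := Matrix.nonsing_inv_mul P hPdetUnit
  have hfact : L' = P * Matrix.diagonal d' * P⁻¹ := by
    calc L' = L' * (P * P⁻¹) := by rw [hPQ, mul_one]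
      _ = (L' * P) * P⁻¹ := by rw [mul_assoc]
      _ = P * Matrix.diagonal d' * P⁻¹ := by rw [hLP]
  have hchar : L'.charpoly = ∏ j, ((X:ℝ[X]) - C (d' j)) := by
    rw [hfact, charpoly_conj' _ _ _ hPQ hQP, charpoly_diagonal']
  have hroots' : L'.charpoly.roots = univ.val.map d' := by
    rw [hchar, roots_prod_linear]
  -- multiset bookkeeping
  set r : Multiset ℝ := (univ.val.erase i₀).map μ with hrdef
  have huniv : (univ.val : Multiset V) = i₀ ::ₘ univ.val.erase i₀ :=
    (Multiset.cons_erase (by simp)).symm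
  have hΛ : (univ.val.map μ : Multiset ℝ) = (0:ℝ) ::ₘ r := by
    conv_lhs => rw [huniv]
    rw [Multiset.map_cons, hμ0, hrdef]
  have hcardr : Multiset.card r = N - 1 := by
    rw [hrdef, Multiset.card_map, Multiset.card_erase_of_mem (by simp)]
    simp [hNdef]
  have hrne : r ≠ 0 := by
    intro h0
    rw [h0] at hcardr
    simp at hcardr
    omega
  have hμnn : ∀ bb ∈ r, (0:ℝ) ≤ bb := by
    intro bb hbb
    obtain ⟨i, -, rfl⟩ := Multiset.mem_map.mp hbb
    exact hLpsd.eigenvalues_nonneg i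
  set t : ℝ := (r.sort (· ≤ ·)).getD 0 0 with htdef
  obtain ⟨htmem, htle⟩ := min_mem_le hrne
  rw [← htdef] at htmem htle
  have hlamG : lambda2 G = t := by
    rw [lambda2_eq_roots G, eig_multiset _ hH, ← hμdef, hΛ, sort_getD_one hμnn]
  -- the multiset for the join
  have hsum : (univ.val : Multiset (V ⊕ Fin 1))
      = (univ.val : Multiset V).map Sum.inl + (univ.val : Multiset (Fin 1)).map Sum.inr := rfl
  have hmap1 : ((univ.val : Multiset V).map (d' ∘ Sum.inl)) = (0:ℝ) ::ₘ r.map (· + 1) := by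
    rw [huniv, Multiset.map_cons]
    congr 1
    · simp [hd'def]
    · rw [hrdef, Multiset.map_map]
      apply Multiset.map_congr rfl
      intro i hi
      have hii : i ≠ i₀ := ((univ.nodup).mem_erase_iff.mp hi).1
      simp [hd'def, hii]
  have hmap2 : ((univ.val : Multiset (Fin 1)).map (d' ∘ Sum.inr)) = {(N:ℝ)+1} := by
    have h0 : (univ.val : Multiset (Fin 1)) = {0} := rfl
    rw [h0]
    simp [hd'def]
  have hmultJ : (univ.val.map d' : Multiset ℝ) = (0:ℝ) ::ₘ ((N:ℝ)+1) ::ₘ r.map (· + 1) := by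
    rw [hsum, Multiset.map_add, Multiset.map_map, Multiset.map_map, hmap1, hmap2,
      Multiset.cons_add, add_comm, Multiset.singleton_add]
  have hnn2 : ∀ bb ∈ ((N:ℝ)+1) ::ₘ r.map (· + 1), (0:ℝ) ≤ bb := by
    intro bb hbb
    rcases Multiset.mem_cons.mp hbb with rfl | hbb
    · linarith
    · obtain ⟨cc, hcc, rfl⟩ := Multiset.mem_map.mp hbb
      have := hμnn cc hcc
      linarith
  have hlamJ : lambda2 (joinOne G) = min ((N:ℝ)+1) (t+1) := by
    rw [lambda2_eq_roots (joinOne G), ← hL'def, hroots', hmultJ, sort_getD_one hnn2]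
    apply sort_getD_zero
    · rcases le_total ((N:ℝ)+1) (t+1) with hle | hle
      · rw [min_eq_left hle]
        exact Multiset.mem_cons_self _ _
      · rw [min_eq_right hle]
        exact Multiset.mem_cons_of_mem (Multiset.mem_map_of_mem _ htmem)
    · intro bb hbb
      rcases Multiset.mem_cons.mp hbb with rfl | hbb
      · exact min_le_left _ _
      · obtain ⟨cc, hcc, rfl⟩ := Multiset.mem_map.mp hbb
        calc min ((N:ℝ)+1) (t+1) ≤ t + 1 := min_le_right _ _
          _ ≤ cc + 1 := by linarith [htle cc hcc]
  -- trace bound : t ≤ N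
  have htr : ∑ i, μ i = ∑ v, (G.degree v : ℝ) := by
    rw [← trace_eq_sum_eig (G.lapMatrix ℝ) hH, Matrix.trace]
    apply Finset.sum_congr rfl
    intro v _
    simp [Matrix.diag, SimpleGraph.lapMatrix, SimpleGraph.degMatrix, SimpleGraph.adjMatrix]
  have hN2 : (2:ℝ) ≤ (N:ℝ) := by exact_mod_cast hV
  have hsumle : ∑ i, μ i ≤ (N:ℝ) * ((N:ℝ) - 1) := by
    rw [htr]
    calc ∑ v, (G.degree v : ℝ) ≤ ∑ _v : V, ((N:ℝ) - 1) := by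
          apply Finset.sum_le_sum
          intro v _
          have hlt := G.degree_lt_card_verts v
          have : (G.degree v : ℝ) + 1 ≤ (N:ℝ) := by exact_mod_cast hlt
          linarith
      _ = (N:ℝ) * ((N:ℝ) - 1) := by
          rw [Finset.sum_const, Finset.card_univ, nsmul_eq_mul, ← hNdef]
  have hsplitsum : ∑ i, μ i = μ i₀ + ∑ i ∈ univ.erase i₀, μ i :=
    (Finset.add_sum_erase univ μ (mem_univ i₀)).symm
  have hlow : ((N:ℝ) - 1) * t ≤ ∑ i ∈ univ.erase i₀, μ i := by
    have hcast : (((N:ℕ) - 1 : ℕ) : ℝ) = (N:ℝ) - 1 := by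
      have : 1 ≤ N := by omega
      push_cast [this]
      ring
    have hc := Finset.card_nsmul_le_sum (univ.erase i₀) μ t ?hle
    · rw [Finset.card_erase_of_mem (mem_univ i₀), Finset.card_univ, ← hNdef,
        nsmul_eq_mul, hcast] at hc
      exact hc
    · intro i hi
      apply htle
      rw [hrdef]
      apply Multiset.mem_map_of_mem
      rw [← Finset.erase_val]
      exact hi
  have ht_le_N : t ≤ (N:ℝ) := by nlinarith [hμ0, hsplitsum, hsumle, hlow]
  rw [hlamJ, hlamG, min_eq_right (by linarith)]




end P4

section P5
open Matrix Polynomial Finset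

variable {V : Type*} [Fintype V] [DecidableEq V]

lemma lambda2_comap_equiv {W : Type*} [Fintype W] [DecidableEq W]
    (e : W ≃ V) (J : SimpleGraph V) [instJ : DecidableRel J.Adj] :
    lambda2 (J.comap ⇑e) = lambda2 J := by
  haveI : DecidableRel (J.comap ⇑e).Adj := fun a b =>
    inferInstanceAs (Decidable (J.Adj (e a) (e b)))
  rw [lambda2_eq_roots, lambda2_eq_roots]
  have hdeg : ∀ i : W, ((J.comap ⇑e).degree i : ℝ) = (J.degree (e i) : ℝ) := by
    intro i
    rw [(J.comap ⇑e).degree_eq_sum_if_adj (R := ℝ), J.degree_eq_sum_if_adj (R := ℝ)]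
    refine Fintype.sum_equiv e _ _ (fun b => ?_)
    by_cases hab : J.Adj (e i) (e b) <;> simp [SimpleGraph.comap_adj, hab]
  have hM : (J.comap ⇑e).lapMatrix ℝ = ((J.lapMatrix ℝ).submatrix ⇑e ⇑e) := by
    ext i j
    simp only [SimpleGraph.lapMatrix, SimpleGraph.degMatrix, SimpleGraph.adjMatrix,
      Matrix.sub_apply, Matrix.diagonal_apply, Matrix.submatrix_apply, Matrix.of_apply,
      EmbeddingLike.apply_eq_iff_eq, SimpleGraph.comap_adj]
    by_cases hij : i = j
    · subst hij; simp [hdeg i]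
    · simp [hij]
  have h2 : (J.lapMatrix ℝ).submatrix ⇑e ⇑e = Matrix.reindex e.symm e.symm (J.lapMatrix ℝ) := by
    ext i j
    simp [Matrix.reindex_apply]
  rw [hM, h2, Matrix.charpoly_reindex]

lemma bot_KMinorFree (n h : ℕ) (hh : 2 ≤ h) : KMinorFree (⊥ : SimpleGraph (Fin n)) h := by
  rintro ⟨B, hne, hconn, hdisj, hedge⟩
  have hadj : (⊤ : SimpleGraph (Fin h)).Adj ⟨0, by omega⟩ ⟨1, by omega⟩ := by
    simp [Fin.ext_iff]
  obtain ⟨u, -, v, -, huv⟩ := hedge hadj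
  exact huv

lemma joinOne_KMinorFree {h : ℕ} (G : SimpleGraph V) (hG : KMinorFree G h) :
    KMinorFree (joinOne G) (h + 1) := by
  classical
  rintro ⟨B, hne, hconn, hdisj, hedge⟩
  have hex : ∃ i₀ : Fin (h+1), ∀ j : Fin h, Sum.inr (0 : Fin 1) ∉ B (i₀.succAbove j) := by
    by_cases hex : ∃ i, Sum.inr (0 : Fin 1) ∈ B i
    · obtain ⟨i₀, hi₀⟩ := hex
      exact ⟨i₀, fun j hmem =>
        Set.disjoint_left.mp (hdisj (Fin.succAbove_ne i₀ j)) hmem hi₀⟩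
    · push_neg at hex
      exact ⟨0, fun j => hex _⟩
  obtain ⟨i₀, hkey⟩ := hex
  have hinl : ∀ (j : Fin h) (z : V ⊕ Fin 1), z ∈ B (i₀.succAbove j) → ∃ v : V, z = Sum.inl v := by
    intro j z hz
    rcases z with v | x
    · exact ⟨v, rfl⟩
    · exfalso
      have hx : x = 0 := Subsingleton.elim x 0
      subst hx
      exact hkey j hz
  apply hG
  refine ⟨fun j => Sum.inl ⁻¹' B (i₀.succAbove j), ?_, ?_, ?_, ?_⟩
  · intro j
    obtain ⟨z, hz⟩ := hne (i₀.succAbove j)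
    obtain ⟨v, rfl⟩ := hinl j z hz
    exact ⟨v, hz⟩
  · intro j
    have hbij : Function.Bijective (fun v : (Sum.inl ⁻¹' B (i₀.succAbove j) : Set V) =>
        (⟨Sum.inl v.1, v.2⟩ : (B (i₀.succAbove j) : Set (V ⊕ Fin 1)))) := by
      constructor
      · intro a b hab
        exact Subtype.ext (Sum.inl_injective (congrArg Subtype.val hab))
      · rintro ⟨z, hz⟩
        obtain ⟨v, rfl⟩ := hinl j z hz
        exact ⟨⟨v, hz⟩, rfl⟩
    have hiso : (G.induce (Sum.inl ⁻¹' B (i₀.succAbove j))) ≃g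
        ((joinOne G).induce (B (i₀.succAbove j))) := by
      refine ⟨Equiv.ofBijective _ hbij, ?_⟩
      intro a b
      rfl
    exact hiso.connected_iff.mpr (hconn _)
  · intro j1 j2 hne'
    exact (hdisj (Fin.succAbove_right_injective.ne hne')).preimage _
  · intro j1 j2 hadj
    have hadj' : (⊤ : SimpleGraph (Fin (h+1))).Adj (i₀.succAbove j1) (i₀.succAbove j2) := by
      simp only [SimpleGraph.top_adj]
      exact Fin.succAbove_right_injective.ne (by simpa using hadj)
    obtain ⟨u, hu, v, hv, huv⟩ := hedge hadj'
    obtain ⟨u', rfl⟩ := hinl j1 u hu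
    obtain ⟨v', rfl⟩ := hinl j2 v hv
    exact ⟨u', hu, v', hv, huv⟩

lemma KMinorFree_comap {m : ℕ} {W : Type*} (e : W ≃ V) (J : SimpleGraph V)
    (hJ : KMinorFree J m) : KMinorFree (J.comap ⇑e) m := by
  rintro ⟨B, hne, hconn, hdisj, hedge⟩
  apply hJ
  refine ⟨fun i => ⇑e '' B i, fun i => (hne i).image _, ?_, ?_, ?_⟩
  · intro i
    have hbij : Function.Bijective (fun w : (B i : Set W) =>
        (⟨e w.1, Set.mem_image_of_mem _ w.2⟩ : (⇑e '' B i : Set V))) := by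
      constructor
      · intro a b hab
        exact Subtype.ext (e.injective (congrArg Subtype.val hab))
      · rintro ⟨z, hz⟩
        obtain ⟨w, hw, rfl⟩ := hz
        exact ⟨⟨w, hw⟩, rfl⟩
    have hiso : ((J.comap ⇑e).induce (B i)) ≃g (J.induce (⇑e '' B i)) := by
      refine ⟨Equiv.ofBijective _ hbij, ?_⟩
      intro a b
      rfl
    exact hiso.connected_iff.mp (hconn i)
  · intro i j hij
    exact (Set.disjoint_image_iff e.injective).mpr (hdisj hij)
  · intro i j hadj
    obtain ⟨u, hu, v, hv, huv⟩ := hedge hadj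
    exact ⟨e u, Set.mem_image_of_mem _ hu, e v, Set.mem_image_of_mem _ hv, huv⟩

end P5

instance finSimpleGraph (m : ℕ) : Finite (SimpleGraph (Fin m)) := by
  apply Finite.of_injective (fun G : SimpleGraph (Fin m) => G.Adj)
  intro G1 G2 hGG
  ext a b
  exact iff_of_eq (congrFun (congrFun hGG a) b)


end Aux

/-- Adding a universal vertex to an extremal `K_h`-minor-free graph:
`λ₂max(K_{h+1} minor free, n+1) ≥ λ₂max(K_h minor free, n) + 1` for `n > h ≥ 2`. -/
theorem lambda2Max_KMinorFree_succ (h n : ℕ) (hh : 2 ≤ h) (hn : h < n) :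
    lambda2Max (fun m => {G : SimpleGraph (Fin m) | KMinorFree G h}) n + 1 ≤
      lambda2Max (fun m => {G : SimpleGraph (Fin m) | KMinorFree G (h + 1)}) (n + 1) := by
  classical
  unfold lambda2Max
  set A := {x : ℝ | ∃ G ∈ {G : SimpleGraph (Fin n) | KMinorFree G h}, x = lambda2 G} with hA
  set Bs := {x : ℝ | ∃ G ∈ {G : SimpleGraph (Fin (n+1)) | KMinorFree G (h+1)}, x = lambda2 G}
    with hB
  have hAne : A.Nonempty := ⟨lambda2 (⊥ : SimpleGraph (Fin n)), ⊥, bot_KMinorFree n h hh, rfl⟩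
  have hBfin : Bs.Finite := by
    have : Bs ⊆ lambda2 '' {G : SimpleGraph (Fin (n+1)) | KMinorFree G (h+1)} := by
      rintro x ⟨G, hG, rfl⟩
      exact ⟨G, hG, rfl⟩
    exact Set.Finite.subset ((Set.toFinite _).image lambda2) this
  have hBbdd : BddAbove Bs := hBfin.bddAbove
  have key : ∀ x ∈ A, x + 1 ≤ sSup Bs := by
    rintro x ⟨G, hG, rfl⟩
    set e : Fin n ⊕ Fin 1 ≃ Fin (n+1) := finSumFinEquiv
    have hmem : lambda2 G + 1 ∈ Bs := by
      refine ⟨(joinOne G).comap ⇑e.symm, ?_, ?_⟩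
      · exact KMinorFree_comap e.symm _ (joinOne_KMinorFree G hG)
      · rw [lambda2_comap_equiv e.symm (joinOne G),
          lambda2_joinOne G (by simp [Fintype.card_fin]; omega)]
    exact le_csSup hBbdd hmem
  have h1 : sSup A ≤ sSup Bs - 1 := by
    apply csSup_le hAne
    intro x hx
    linarith [key x hx]
  linarith
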